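/- Let R be a commutative Noetherian ring (over ℝ) of real-valued functions on a set M, let A ⊆ R be a subalgebra, and let B be an ℝ-basis of A. Then there exist finitely many elements ρ_1, ..., ρ_k ∈ B such that for all p, q ∈ M: if ρ_i(p) = ρ_i(q) for all i = 1,...,k, then f(p) = f(q) for all f ∈ A. That is, a finite subset of any basis of A separates the same points as A. -/
import Mathlib
set_option synthInstance.maxHeartbeats 400000
set_option maxHeartbeats 800000

open TensorProduct

/-- If the span of a set is finitely generated, some finite subset has the same span. -/
lemma exists_finite_subset_span_eq {R M : Type*} [Semiring R] [AddCommMonoid M] [Module R M]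
    (S : Set M) (h : (Submodule.span R S).FG) :
    ∃ T : Set M, T.Finite ∧ T ⊆ S ∧ Submodule.span R T = Submodule.span R S := by
  classical
  obtain ⟨F, hF⟩ := h
  choose T hTS hT using fun x (hx : x ∈ F) =>
    Submodule.mem_span_finite_of_mem_span (S := S) (x := x)
      (hF ▸ Submodule.subset_span (by exact hx))
  refine ⟨⋃ x ∈ F, (T x ‹_› : Set M), ?_, ?_, le_antisymm ?_ ?_⟩
  · exact Set.Finite.biUnion' F.finite_toSet fun x hx => (T x hx).finite_toSet
  · exact Set.iUnion₂_subset fun x hx => hTS x hx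
  · exact Submodule.span_mono (Set.iUnion₂_subset fun x hx => hTS x hx)
  · rw [← hF, Submodule.span_le]
    intro x hx
    exact Submodule.span_mono (Set.subset_iUnion₂ x hx) (hT x hx)

/-- Let `R` be a commutative Noetherian `ℝ`-algebra of real-valued
functions on a set `M` (more precisely, `R ⊗[ℝ] R` is Noetherian), `A ⊆ R` a
subalgebra and `B` an `ℝ`-basis of `A`. Then finitely many elements `ρ_1, …, ρ_k ∈ B`
separate the same points of `M` as all of `A`. -/
theorem stmt_2 {M : Type*} (R : Subalgebra ℝ (M → ℝ))
    [IsNoetherianRing (TensorProduct ℝ R R)]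
    (A : Subalgebra ℝ (M → ℝ)) (hAR : A ≤ R)
    (B : Set (M → ℝ)) (hBA : B ⊆ (A : Set (M → ℝ)))
    (hspan : Submodule.span ℝ B = Subalgebra.toSubmodule A)
    (hli : LinearIndependent ℝ (fun b : B => (b : M → ℝ))) :
    ∃ (k : ℕ) (ρ : Fin k → (M → ℝ)), (∀ i, ρ i ∈ B) ∧
      ∀ p q : M, (∀ i, ρ i p = ρ i q) → ∀ f ∈ A, f p = f q := by
  classical
  -- lift elements of B to R
  set g : B → TensorProduct ℝ R R := fun b =>
    1 ⊗ₜ (⟨(b : M → ℝ), hAR (hBA b.2)⟩ : R) - (⟨(b : M → ℝ), hAR (hBA b.2)⟩ : R) ⊗ₜ 1 with hg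
  set S : Set (TensorProduct ℝ R R) := Set.range g with hS
  have hFG : (Ideal.span S).FG := IsNoetherian.noetherian _
  obtain ⟨T, hTfin, hTS, hTspan⟩ := exists_finite_subset_span_eq S hFG
  haveI : Fintype T := hTfin.fintype
  -- choose for each t ∈ T an element of B mapping to it
  choose bt hbt using fun t : T => (hTS t.2 : (t : TensorProduct ℝ R R) ∈ Set.range g)
  let k := Fintype.card T
  let e : Fin k ≃ T := (Fintype.equivFin T).symm
  refine ⟨k, fun i => (bt (e i) : M → ℝ), fun i => (bt (e i)).2, ?_⟩
  intro p q hpq f hf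
  -- the evaluation algebra map
  let evp : R →ₐ[ℝ] ℝ := (Pi.evalAlgHom ℝ (fun _ => ℝ) p).comp R.val
  let evq : R →ₐ[ℝ] ℝ := (Pi.evalAlgHom ℝ (fun _ => ℝ) q).comp R.val
  let φ : TensorProduct ℝ R R →ₐ[ℝ] ℝ :=
    Algebra.TensorProduct.lift evp evq (fun _ _ => Commute.all _ _)
  have hφg : ∀ b : B, φ (g b) = (b : M → ℝ) q - (b : M → ℝ) p := by
    intro b
    simp [hg, φ, evp, evq, Algebra.TensorProduct.lift_tmul]
  -- all generators of span T vanish under φ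
  have hker : Ideal.span S ≤ RingHom.ker (φ : TensorProduct ℝ R R →+* ℝ) := by
    have hsp : Ideal.span S = Ideal.span T := by
      show Submodule.span _ S = Submodule.span _ T; rw [hTspan]
    rw [hsp, Ideal.span_le]
    intro t ht
    have : φ t = 0 := by
      have ht' : g (bt ⟨t, ht⟩) = t := hbt ⟨t, ht⟩
      rw [← ht', hφg]
      have := hpq (e.symm ⟨t, ht⟩)
      simp only [Equiv.apply_symm_apply] at this
      rw [this]; ring
    exact this
  -- hence every element of B takes equal values at p and q
  have hBval : ∀ b ∈ B, b p = b q := by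
    intro b hb
    have hmem : g ⟨b, hb⟩ ∈ Ideal.span S := Ideal.subset_span ⟨⟨b, hb⟩, rfl⟩
    have h0 : φ (g ⟨b, hb⟩) = 0 := hker hmem
    have h2 := hφg ⟨b, hb⟩
    have : (0:ℝ) = b q - b p := by rw [← h0, h2]
    linarith
  -- now f ∈ A = span B
  have hfspan : f ∈ Submodule.span ℝ B := by rw [hspan]; exact hf
  refine Submodule.span_induction (fun x hx => hBval x hx) (by simp) ?_ ?_ hfspan
  · intro x y _ _ hx hy; simp [hx, hy]
  · intro c x _ hx; simp [hx]
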